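/- Let A ∈ ℝ^{m×d}, G : ℝ^d → ℝ^K, y ∈ ℝ^K, and Γ ∈ ℝ^{K×K} symmetric positive definite. Given an initial ensemble u^{1,0}, …, u^{J,0} ∈ ℝ^d with A u^{j,0} = 0 for all j, define recursively for n ≥ 0 the unconstrained ensemble Kalman filter iteration u^{j,n+1} = u^{j,n} + C_uw^{n} (C_ww^{n} + Γ⁻¹)⁻¹ (y − G(u^{j,n})), where C_uw^{n} = (1/J)∑_k (u^{k,n} − ū^n)(G(u^{k,n}) − Ḡ^n)ᵀ and C_ww^{n} = (1/J)∑_k (G(u^{k,n}) − Ḡ^n)(G(u^{k,n}) − Ḡ^n)ᵀ, with ū^n = (1/J)∑_k u^{k,n} and Ḡ^n = (1/J)∑_k G(u^{k,n}). Then C_ww^{n} + Γ⁻¹ is invertible at every step and A u^{j,n} = 0 for all j = 1,…,J and all n ≥ 0. -/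

import Mathlib

open Matrix

lemma vecMulVec_self_posSemidef {K : ℕ} (w : Fin K → ℝ) :
    (vecMulVec w w).PosSemidef := by
  rw [posSemidef_iff_dotProduct_mulVec]
  constructor
  · ext i j
    simp [Matrix.IsHermitian, conjTranspose_apply, vecMulVec_apply, mul_comm]
  · intro x
    have h : vecMulVec w w *ᵥ x = (w ⬝ᵥ x) • w := by
      ext i
      simp [mulVec, dotProduct, vecMulVec_apply, Finset.mul_sum, mul_comm, mul_left_comm]
    rw [h, dotProduct_smul]
    have : star x ⬝ᵥ w = w ⬝ᵥ x := by simp [dotProduct, mul_comm]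
    rw [smul_eq_mul, this]
    exact mul_self_nonneg _

lemma smul_sum_vecMulVec_posSemidef {K J : ℕ} (c : ℝ) (hc : 0 ≤ c)
    (w : Fin J → Fin K → ℝ) :
    (c • ∑ k, vecMulVec (w k) (w k)).PosSemidef := by
  have hsum : (∑ k, vecMulVec (w k) (w k)).PosSemidef := by
    refine Finset.sum_induction _ _ (fun a b ha hb => ha.add hb)
      Matrix.PosSemidef.zero (fun k _ => vecMulVec_self_posSemidef (w k))
  rw [posSemidef_iff_dotProduct_mulVec]
  constructor
  · rw [Matrix.IsHermitian, conjTranspose_smul, hsum.1.eq]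
    simp
  · intro x
    rw [smul_mulVec, dotProduct_smul, smul_eq_mul]
    exact mul_nonneg hc (hsum.dotProduct_mulVec_nonneg x)

/-- Linear equality constraints `A u = 0` are automatically preserved by the
unconstrained ensemble Kalman filter iteration, for an arbitrary (possibly
nonlinear) forward operator `G`; moreover `C_ww^n + Γ⁻¹` is invertible at every
step. -/
theorem stmt_6 {m d K J : ℕ} (hJ : 0 < J)
    (A : Matrix (Fin m) (Fin d) ℝ)
    (G : (Fin d → ℝ) → (Fin K → ℝ)) (y : Fin K → ℝ)
    (Γ : Matrix (Fin K) (Fin K) ℝ) (hΓ : Γ.PosDef)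
    (u : ℕ → Fin J → (Fin d → ℝ))
    (ubar : ℕ → (Fin d → ℝ)) (hubar : ∀ n, ubar n = (1 / (J : ℝ)) • ∑ k, u n k)
    (Gbar : ℕ → (Fin K → ℝ)) (hGbar : ∀ n, Gbar n = (1 / (J : ℝ)) • ∑ k, G (u n k))
    (Cuw : ℕ → Matrix (Fin d) (Fin K) ℝ)
    (hCuw : ∀ n, Cuw n
      = (1 / (J : ℝ)) • ∑ k, vecMulVec (u n k - ubar n) (G (u n k) - Gbar n))
    (Cww : ℕ → Matrix (Fin K) (Fin K) ℝ)
    (hCww : ∀ n, Cww n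
      = (1 / (J : ℝ)) • ∑ k, vecMulVec (G (u n k) - Gbar n) (G (u n k) - Gbar n))
    (hinit : ∀ j, A *ᵥ u 0 j = 0)
    (hiter : ∀ n j, u (n + 1) j
      = u n j + (Cuw n * (Cww n + Γ⁻¹)⁻¹) *ᵥ (y - G (u n j))) :
    (∀ n, IsUnit (Cww n + Γ⁻¹).det) ∧ ∀ n j, A *ᵥ u n j = 0 := by
  constructor
  · intro n
    have hpsd : (Cww n).PosSemidef := by
      rw [hCww n]
      exact smul_sum_vecMulVec_posSemidef _ (by positivity) _
    have hpd : (Cww n + Γ⁻¹).PosDef := Matrix.PosDef.posSemidef_add hpsd hΓ.inv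
    exact hpd.det_pos.ne'.isUnit
  · intro n
    induction n with
    | zero => exact hinit
    | succ n ih =>
      intro j
      have hbar : A *ᵥ ubar n = 0 := by
        rw [hubar n, mulVec_smul]
        have hs : A *ᵥ (∑ k, u n k) = ∑ k, A *ᵥ u n k := by
          exact map_sum A.mulVecLin (fun k => u n k) Finset.univ
        rw [hs]
        simp [ih]
      have hACuw : A * Cuw n = 0 := by
        rw [hCuw n, Matrix.mul_smul, Matrix.mul_sum]
        have h1 : ∀ k, A * vecMulVec (u n k - ubar n) (G (u n k) - Gbar n)
            = vecMulVec (A *ᵥ (u n k - ubar n)) (G (u n k) - Gbar n) := by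
          intro k
          ext i j'
          simp [Matrix.mul_apply, vecMulVec_apply, mulVec, dotProduct,
            Finset.sum_mul, mul_assoc]
        have h2 : ∀ k : Fin J, A *ᵥ (u n k - ubar n) = 0 := fun k => by
          rw [mulVec_sub, ih k, hbar, sub_zero]
        have h3 : ∀ v : Fin K → ℝ, vecMulVec (0 : Fin m → ℝ) v = 0 := by
          intro v; ext i j'; simp [vecMulVec_apply]
        simp only [h1, h2, h3, Finset.sum_const_zero, smul_zero]
      rw [hiter n j, mulVec_add, ih j, zero_add, mulVec_mulVec, ← Matrix.mul_assoc,
        hACuw, Matrix.zero_mul, zero_mulVec]
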